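/- Let r be a prime and let m₁, m₂, m₃ be pairwise distinct units of ZMod r and n₁, n₂, n₃ be pairwise distinct units of ZMod r. For a triple w = (w₁,w₂,w₃) of units of ZMod r, define T(w) to be the multiset over ZMod r of the elements ((t₁ + t₂ + t₃ + 2 : ℕ) : ZMod r), taken over all triples (t₁,t₂,t₃) ∈ {0,…,r−1}³ such that w₁·(t₁+1) + w₂·(t₂+1) + w₃·t₃ = 0 in ZMod r and ((−w₂⁻¹·w₁·(t₁+1) : ZMod r)).val + ((−w₂⁻¹·w₃·t₃ − 1 : ZMod r)).val ≥ r. Then T((m₁,m₂,m₃)) = T((n₁,n₂,n₃)). -/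

import Mathlib

/-- The multiset `T(w) = W̄(r;(w₁,w₂,w₃))` over `ZMod r`: the elements
`((t₁ + t₂ + t₃ + 2 : ℕ) : ZMod r)`, taken over all triples
`(t₁,t₂,t₃) ∈ {0,…,r−1}³` with `w₁·(t₁+1) + w₂·(t₂+1) + w₃·t₃ = 0` in `ZMod r` and
`(−w₂⁻¹·w₁·(t₁+1)).val + (−w₂⁻¹·w₃·t₃ − 1).val ≥ r`. -/
def Tms (r : ℕ) (w₁ w₂ w₃ : ZMod r) : Multiset (ZMod r) :=
  (((Finset.range r ×ˢ Finset.range r ×ˢ Finset.range r).filter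
      (fun p : ℕ × ℕ × ℕ =>
        w₁ * ((p.1 : ZMod r) + 1) + w₂ * ((p.2.1 : ZMod r) + 1) + w₃ * (p.2.2 : ZMod r) = 0 ∧
        r ≤ (-w₂⁻¹ * w₁ * ((p.1 : ZMod r) + 1)).val
            + (-w₂⁻¹ * w₃ * (p.2.2 : ZMod r) - 1).val)).val).map
    fun p : ℕ × ℕ × ℕ => ((p.1 + p.2.1 + p.2.2 + 2 : ℕ) : ZMod r)

lemma val_add_split {r : ℕ} [NeZero r] (x y : ZMod r) :
    x.val + y.val = (x + y).val + (if r ≤ x.val + y.val then r else 0) := by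
  have hx := ZMod.val_lt x
  have hy := ZMod.val_lt y
  rw [ZMod.val_add]
  rcases lt_or_ge (x.val + y.val) r with h | h
  · rw [Nat.mod_eq_of_lt h, if_neg (not_le.mpr h)]; omega
  · rw [if_pos h, Nat.mod_eq_sub_mod h, Nat.mod_eq_of_lt (by omega)]
    omega

lemma key_count {r : ℕ} [NeZero r] (e g : ZMod r) (hg : IsUnit g) (hg1 : IsUnit (1 + g)) :
    (Finset.univ.filter (fun a : ZMod r => r ≤ a.val + (e + g * a).val)).card * r
      = ∑ x : ZMod r, x.val := by
  have hbij : ∀ (c d : ZMod r), IsUnit d → Function.Bijective (fun a : ZMod r => c + d * a) := by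
    intro c d hd
    refine Finite.injective_iff_bijective.mp fun a b hab => ?_
    exact hd.mul_left_cancel (add_left_cancel hab)
  have h1 : ∑ a : ZMod r, (a.val + (e + g * a).val)
      = (∑ a : ZMod r, (a + (e + g * a)).val)
        + ∑ a : ZMod r, (if r ≤ a.val + (e + g * a).val then r else 0) := by
    rw [← Finset.sum_add_distrib]
    exact Finset.sum_congr rfl fun a _ => val_add_split a _
  have h2 : ∑ a : ZMod r, (e + g * a).val = ∑ x : ZMod r, x.val :=
    Fintype.sum_bijective _ (hbij e g hg) _ _ fun a => rfl
  have h3 : ∑ a : ZMod r, (a + (e + g * a)).val = ∑ x : ZMod r, x.val := by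
    have : ∀ a : ZMod r, a + (e + g * a) = e + (1 + g) * a := fun a => by ring
    simp_rw [this]
    exact Fintype.sum_bijective _ (hbij e (1 + g) hg1) _ _ fun a => rfl
  have h4 : ∑ a : ZMod r, (if r ≤ a.val + (e + g * a).val then r else 0)
      = (Finset.univ.filter (fun a : ZMod r => r ≤ a.val + (e + g * a).val)).card * r := by
    rw [← Finset.sum_filter, Finset.sum_const, smul_eq_mul]
  rw [Finset.sum_add_distrib, h2, h3, h4] at h1
  omega

lemma count_Tms {r : ℕ} [NeZero r] (hr : r.Prime) (w₁ w₂ w₃ : ZMod r)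
    (h1 : w₁ ≠ 0) (h2 : w₂ ≠ 0) (h3 : w₃ ≠ 0)
    (h12 : w₁ ≠ w₂) (h13 : w₁ ≠ w₃) (h23 : w₂ ≠ w₃) (v : ZMod r) :
    ∃ e g : ZMod r, IsUnit g ∧ IsUnit (1 + g) ∧
      Multiset.count v (Tms r w₁ w₂ w₃)
        = (Finset.univ.filter (fun a : ZMod r => r ≤ a.val + (e + g * a).val)).card := by
  haveI : Fact r.Prime := ⟨hr⟩
  set α := 1 - w₂ * w₁⁻¹ with hα
  set β := 1 - w₂ * w₃⁻¹ with hβ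
  have hα0 : α ≠ 0 := by
    rw [hα, sub_ne_zero]
    intro h; apply h12; field_simp at h; exact h
  have hβ0 : β ≠ 0 := by
    rw [hβ, sub_ne_zero]
    intro h; apply h23; field_simp at h; first | exact h | exact h.symm
  set e := β⁻¹ * (v - β) with he
  set g := -(β⁻¹ * α) with hg
  have hgu : IsUnit g := by
    rw [hg]; exact (IsUnit.mk0 _ (by simp [hα0, hβ0])).neg
  have hg1u : IsUnit (1 + g) := by
    rw [isUnit_iff_ne_zero]
    intro h
    rw [hg] at h
    have hab : α = β := by
      have h' : β⁻¹ * α = 1 := by linear_combination -h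
      field_simp at h'
      exact h'
    rw [hα, hβ] at hab
    apply h13
    have hinv : w₂ * w₁⁻¹ = w₂ * w₃⁻¹ := by linear_combination -hab
    field_simp at hinv
    first
    | exact hinv
    | exact hinv.symm
    | (rcases hinv with h' | h'
       · exact h'.symm
       · exact absurd h' h2)
  refine ⟨e, g, hgu, hg1u, ?_⟩
  -- β * (e + g * a) = v - β - α * a, key identity
  have hkey : ∀ a : ZMod r, β * (e + g * a) = v - β - α * a := by
    intro a
    rw [he, hg]
    field_simp
    ring
  -- rewrite count as finset card
  unfold Tms
  rw [Multiset.count_map, ← Finset.filter_val]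
  show (Finset.filter _ _).card = _
  rw [Finset.filter_filter]
  refine Finset.card_bij'
    (fun (p : ℕ × ℕ × ℕ) _ => -w₂⁻¹ * w₁ * ((p.1 : ZMod r) + 1))
    (fun (a : ZMod r) _ => ((-w₁⁻¹ * w₂ * a - 1).val,
        ((a + (e + g * a)).val, (-w₃⁻¹ * w₂ * ((e + g * a) + 1)).val)))
    ?_ ?_ ?_ ?_
  · -- hi : maps into t
    rintro ⟨t₁, t₂, t₃⟩ hp
    simp only [Finset.mem_filter, Finset.mem_product, Finset.mem_range] at hp
    obtain ⟨⟨ht₁, ht₂, ht₃⟩, ⟨hcond1, hcond2⟩, hv⟩ := hp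
    simp only [Finset.mem_filter, Finset.mem_univ, true_and]
    set x₁ : ZMod r := (t₁ : ZMod r)
    set x₂ : ZMod r := (t₂ : ZMod r)
    set x₃ : ZMod r := (t₃ : ZMod r)
    set a : ZMod r := -w₂⁻¹ * w₁ * (x₁ + 1) with ha
    set c : ZMod r := -w₂⁻¹ * w₃ * x₃ - 1 with hc
    have hwa : w₂ * a = -(w₁ * (x₁ + 1)) := by rw [ha]; field_simp
    have hwc : w₂ * (c + 1) = -(w₃ * x₃) := by rw [hc]; field_simp; ring
    have hx2 : a + (c + 1) = x₂ + 1 := by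
      apply mul_left_cancel₀ h2
      linear_combination hwa + hwc - hcond1
    have hv' : v = α * a + β * (c + 1) := by
      have hs1 : w₂ * w₁⁻¹ * a = -(x₁ + 1) := by rw [ha]; field_simp
      have hs2 : w₂ * w₃⁻¹ * (c + 1) = -x₃ := by rw [hc]; field_simp; ring
      rw [hα, hβ]
      have hvx : v = x₁ + x₂ + x₃ + 2 := by rw [hv]; push_cast; ring
      linear_combination hvx + hs1 + hs2 - hx2
    have hA1 : e + g * a = c := by
      apply mul_left_cancel₀ hβ0
      rw [hkey a]
      linear_combination hv'
    rw [hA1]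
    exact hcond2
  · -- hj : maps back into s
    intro a hamem
    simp only [Finset.mem_filter, Finset.mem_univ, true_and] at hamem
    set c : ZMod r := e + g * a with hc
    have hcv : v = α * a + β * (c + 1) := by
      have := hkey a
      rw [← hc] at this
      linear_combination -this
    simp only [Finset.mem_filter, Finset.mem_product, Finset.mem_range]
    have hlt : ∀ x : ZMod r, x.val < r := ZMod.val_lt
    refine ⟨⟨hlt _, hlt _, hlt _⟩, ⟨?_, ?_⟩, ?_⟩
    · -- cond1
      simp only [ZMod.natCast_val, ZMod.cast_id]
      field_simp
      ring
    · -- cond2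
      simp only [ZMod.natCast_val, ZMod.cast_id]
      have e1 : -w₂⁻¹ * w₁ * ((-w₁⁻¹ * w₂ * a - 1) + 1) = a := by field_simp; ring
      have e2 : -w₂⁻¹ * w₃ * (-w₃⁻¹ * w₂ * (c + 1)) - 1 = c := by field_simp; ring
      rw [e1, e2]
      exact hamem
    · -- v = f (j a)
      push_cast [ZMod.natCast_val, ZMod.cast_id]
      rw [hcv, hα, hβ]
      field_simp
      ring
  · -- left inverse
    rintro ⟨t₁, t₂, t₃⟩ hp
    simp only [Finset.mem_filter, Finset.mem_product, Finset.mem_range] at hp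
    obtain ⟨⟨ht₁, ht₂, ht₃⟩, ⟨hcond1, hcond2⟩, hv⟩ := hp
    set x₁ : ZMod r := (t₁ : ZMod r)
    set x₂ : ZMod r := (t₂ : ZMod r)
    set x₃ : ZMod r := (t₃ : ZMod r)
    set a : ZMod r := -w₂⁻¹ * w₁ * (x₁ + 1) with ha
    set c : ZMod r := -w₂⁻¹ * w₃ * x₃ - 1 with hc
    have hwa : w₂ * a = -(w₁ * (x₁ + 1)) := by rw [ha]; field_simp
    have hwc : w₂ * (c + 1) = -(w₃ * x₃) := by rw [hc]; field_simp; ring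
    have hx2 : a + (c + 1) = x₂ + 1 := by
      apply mul_left_cancel₀ h2
      linear_combination hwa + hwc - hcond1
    have hv' : v = α * a + β * (c + 1) := by
      have hs1 : w₂ * w₁⁻¹ * a = -(x₁ + 1) := by rw [ha]; field_simp
      have hs2 : w₂ * w₃⁻¹ * (c + 1) = -x₃ := by rw [hc]; field_simp; ring
      rw [hα, hβ]
      have hvx : v = x₁ + x₂ + x₃ + 2 := by rw [hv]; push_cast; ring
      linear_combination hvx + hs1 + hs2 - hx2
    have hA1 : e + g * a = c := by
      apply mul_left_cancel₀ hβ0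
      rw [hkey a]
      linear_combination hv'
    have j1 : -w₁⁻¹ * w₂ * a - 1 = x₁ := by rw [ha]; field_simp; ring
    have j2 : a + (e + g * a) = x₂ := by rw [hA1]; linear_combination hx2
    have j3 : -w₃⁻¹ * w₂ * ((e + g * a) + 1) = x₃ := by
      rw [hA1]
      have : -w₃⁻¹ * w₂ * (c + 1) = -w₃⁻¹ * (w₂ * (c + 1)) := by ring
      rw [this, hwc]
      field_simp
    simp only [j1, j2, j3]
    rw [ZMod.val_natCast_of_lt ht₁, ZMod.val_natCast_of_lt ht₂, ZMod.val_natCast_of_lt ht₃]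
  · -- right inverse
    intro a _
    simp only [ZMod.natCast_val, ZMod.cast_id]
    field_simp
    ring

theorem stmt_18 (r : ℕ) (hr : r.Prime)
    (m₁ m₂ m₃ n₁ n₂ n₃ : ZMod r)
    (hm₁ : IsUnit m₁) (hm₂ : IsUnit m₂) (hm₃ : IsUnit m₃)
    (hn₁ : IsUnit n₁) (hn₂ : IsUnit n₂) (hn₃ : IsUnit n₃)
    (hm12 : m₁ ≠ m₂) (hm13 : m₁ ≠ m₃) (hm23 : m₂ ≠ m₃)
    (hn12 : n₁ ≠ n₂) (hn13 : n₁ ≠ n₃) (hn23 : n₂ ≠ n₃) :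
    Tms r m₁ m₂ m₃ = Tms r n₁ n₂ n₃ := by
  haveI : Fact r.Prime := ⟨hr⟩
  haveI : NeZero r := ⟨hr.pos.ne'⟩
  ext v
  obtain ⟨e, g, hg, hg1, hcm⟩ := count_Tms hr m₁ m₂ m₃
    hm₁.ne_zero hm₂.ne_zero hm₃.ne_zero hm12 hm13 hm23 v
  obtain ⟨e', g', hg', hg1', hcn⟩ := count_Tms hr n₁ n₂ n₃
    hn₁.ne_zero hn₂.ne_zero hn₃.ne_zero hn12 hn13 hn23 v
  have key : Multiset.count v (Tms r m₁ m₂ m₃) * r = Multiset.count v (Tms r n₁ n₂ n₃) * r := by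
    rw [hcm, hcn, key_count e g hg hg1, key_count e' g' hg' hg1']
  exact Nat.eq_of_mul_eq_mul_right hr.pos key
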